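/- Let d ≥ 1 and let f : ℝ_{>0}^d → ℝ be componentwise subadditive and Lebesgue measurable. Let T be either ℝ_{>0} or ℤ_{>0}, and for each i ∈ {1,…,d} let x_i : T → ℝ_{>0} satisfy lim_{t→+∞} x_i(t) = +∞. Then inf_{t ∈ T} f(x_1(t),…,x_d(t))/(x_1(t)⋯x_d(t)) = inf_{x_1,…,x_d > 0} f(x_1,…,x_d)/(x_1⋯x_d). -/

import Mathlib

open Filter MeasureTheory Topology Finset ENNReal

section FeketeAux

variable {d : ℕ} {f : (Fin d → ℝ) → ℝ}

lemma fekete_iter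
    (hf : ∀ (i : Fin d) (x : Fin d → ℝ) (y : ℝ), (∀ j, 0 < x j) → 0 < y →
      f (Function.update x i (x i + y)) ≤ f x + f (Function.update x i y))
    (w : Fin d → ℝ) (hw : ∀ i, 0 < w i) (i : Fin d) (m : ℕ) (r : ℝ) (hr : 0 < r) :
    f (Function.update w i ((m : ℝ) * w i + r)) ≤ (m : ℝ) * f w + f (Function.update w i r) := by
  induction m with
  | zero => simp
  | succ m ih =>
    have h1 := hf i w ((m : ℝ) * w i + r) hw (by have := hw i; positivity)
    have e : ((m + 1 : ℕ) : ℝ) * w i + r = w i + ((m : ℝ) * w i + r) := by push_cast; ring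
    rw [e]
    refine h1.trans ?_
    push_cast
    linarith

lemma fekete_dec
    (hf : ∀ (i : Fin d) (x : Fin d → ℝ) (y : ℝ), (∀ j, 0 < x j) → 0 < y →
      f (Function.update x i (x i + y)) ≤ f x + f (Function.update x i y))
    (x : Fin d → ℝ) (hx : ∀ i, 0 < x i) (n : Fin d → ℕ) (r : Fin d → ℝ)
    (hr : ∀ i, x i ≤ r i ∧ r i ≤ 2 * x i) (B : ℝ)
    (hB : ∀ z : Fin d → ℝ, (∀ i, x i ≤ z i ∧ z i ≤ 2 * x i) → f z ≤ B)
    (T : Finset (Fin d)) :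
    ∀ w : Fin d → ℝ, (∀ i, x i ≤ w i ∧ w i ≤ 2 * x i) →
      f (fun i => if i ∈ T then (n i : ℝ) * x i + r i else w i) ≤
        (∏ i ∈ T, (n i : ℝ)) * f (fun i => if i ∈ T then x i else w i) +
          ((∏ i ∈ T, ((n i : ℝ) + 1)) - ∏ i ∈ T, (n i : ℝ)) * B := by
  induction T using Finset.induction with
  | empty => intro w hw; simp
  | @insert a T ha ih =>
    intro w hw
    have hwpos : ∀ i, 0 < w i := fun i => lt_of_lt_of_le (hx i) (hw i).1
    set w₀ : Fin d → ℝ := fun i => if i ∈ T then (n i : ℝ) * x i + r i else Function.update w a (x a) i with hw₀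
    have hw₀pos : ∀ i, 0 < w₀ i := by
      intro i
      by_cases h1 : i ∈ T
      · simp only [hw₀, h1, if_pos]
        have h3 : (0:ℝ) ≤ (n i:ℝ) * x i := mul_nonneg (Nat.cast_nonneg _) (hx i).le
        linarith [lt_of_lt_of_le (hx i) (hr i).1]
      · simp only [hw₀, h1, if_neg, not_false_iff]
        by_cases h2 : i = a
        · subst h2; simp [Function.update_self]; exact hx i
        · simp [Function.update_of_ne h2]; exact hwpos i
    have hw₀a : w₀ a = x a := by simp [hw₀, ha]
    -- the main point equals update w₀ a (n a * w₀ a + r a)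
    have key := fekete_iter hf w₀ hw₀pos a (n a) (r a)
      (lt_of_lt_of_le (hx a) (hr a).1)
    have e1 : Function.update w₀ a ((n a : ℝ) * w₀ a + r a) =
        (fun i => if i ∈ insert a T then (n i : ℝ) * x i + r i else w i) := by
      funext i
      by_cases h2 : i = a
      · subst h2; simp [Function.update_self, hw₀a]
      · simp only [Function.update_of_ne h2, hw₀, mem_insert, h2, false_or]
    rw [e1] at key
    -- apply the induction hypothesis to the two resulting points
    have hw₁ : ∀ i, x i ≤ Function.update w a (x a) i ∧ Function.update w a (x a) i ≤ 2 * x i := by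
      intro i
      by_cases h2 : i = a
      · subst h2; simp [Function.update_self]
        linarith [hx i]
      · simp [Function.update_of_ne h2]; exact hw i
    have hw₂ : ∀ i, x i ≤ Function.update w a (r a) i ∧ Function.update w a (r a) i ≤ 2 * x i := by
      intro i
      by_cases h2 : i = a
      · subst h2; simp [Function.update_self]; exact hr i
      · simp [Function.update_of_ne h2]; exact hw i
    have ih1 := ih (Function.update w a (x a)) hw₁
    have ih2 := ih (Function.update w a (r a)) hw₂
    rw [← hw₀] at ih1
    have e4 : (fun i => if i ∈ T then (n i : ℝ) * x i + r i else Function.update w a (r a) i)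
        = Function.update w₀ a (r a) := by
      funext i
      by_cases h2 : i = a
      · subst h2; simp [Function.update_self, ha]
      · simp only [Function.update_of_ne h2, hw₀]
    rw [e4] at ih2
    have e3 : (fun i => if i ∈ T then x i else Function.update w a (x a) i)
        = (fun i => if i ∈ insert a T then x i else w i) := by
      funext i
      by_cases h2 : i = a
      · subst h2; simp [Function.update_self, ha]
      · simp only [Function.update_of_ne h2, mem_insert, h2, false_or]
    rw [e3] at ih1
    have hX₂ : f (fun i => if i ∈ T then x i else Function.update w a (r a) i) ≤ B := by
      apply hB
      intro i
      by_cases h1 : i ∈ T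
      · simp [h1]; linarith [hx i]
      · simp [h1]
        by_cases h2 : i = a
        · subst h2; simp [Function.update_self]; exact hr i
        · simp [Function.update_of_ne h2]; exact hw i
    rw [Finset.prod_insert ha, Finset.prod_insert ha]
    have hP : (0:ℝ) ≤ ∏ i ∈ T, (n i : ℝ) := Finset.prod_nonneg fun i _ => Nat.cast_nonneg _
    have hna : (0:ℝ) ≤ (n a : ℝ) := Nat.cast_nonneg _
    have m1 := mul_le_mul_of_nonneg_left ih1 hna
    have m2 := mul_le_mul_of_nonneg_left hX₂ hP
    nlinarith [key, ih2, m1, m2]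

lemma fekete_split
    (hf : ∀ (i : Fin d) (x : Fin d → ℝ) (y : ℝ), (∀ j, 0 < x j) → 0 < y →
      f (Function.update x i (x i + y)) ≤ f x + f (Function.update x i y))
    (T : Finset (Fin d)) :
    ∀ w : Fin d → ℝ, (∀ i, 0 < w i) → ∀ s : Fin d → ℝ, (∀ i, 0 < s i) →
      (∀ i ∈ T, s i < w i) →
      f w ≤ ∑ S ∈ T.powerset,
        f (fun i => if i ∈ T then (if i ∈ S then s i else w i - s i) else w i) := by
  induction T using Finset.induction with
  | empty => intro w hw s hs hsw; simp
  | @insert a T ha ih =>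
    intro w hw s hs hsw
    have hsa : s a < w a := hsw a (mem_insert_self a T)
    set w₁ : Fin d → ℝ := Function.update w a (s a) with hw₁
    set w₂ : Fin d → ℝ := Function.update w a (w a - s a) with hw₂
    have hw₁pos : ∀ i, 0 < w₁ i := by
      intro i
      by_cases h2 : i = a
      · subst h2; simp [hw₁, Function.update_self]; exact hs i
      · simp [hw₁, Function.update_of_ne h2]; exact hw i
    have hw₂pos : ∀ i, 0 < w₂ i := by
      intro i
      by_cases h2 : i = a
      · subst h2; simp [hw₂, Function.update_self]; linarith
      · simp [hw₂, Function.update_of_ne h2]; exact hw i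
    have key : f w ≤ f w₁ + f w₂ := by
      have h1 := hf a w₁ (w a - s a) hw₁pos (by linarith)
      have e1 : Function.update w₁ a (w₁ a + (w a - s a)) = w := by
        funext i
        by_cases h2 : i = a
        · subst h2; simp [hw₁, Function.update_self]
        · simp [hw₁, Function.update_of_ne h2]
      have e2 : Function.update w₁ a (w a - s a) = w₂ := by
        simp [hw₁, hw₂, Function.update_idem]
      rw [e1, e2] at h1
      exact h1
    have ih1 := ih w₁ hw₁pos s hs (fun i hi => by
      have h2 : i ≠ a := fun h => ha (h ▸ hi)
      simpa [hw₁, Function.update_of_ne h2] using hsw i (mem_insert_of_mem hi))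
    have ih2 := ih w₂ hw₂pos s hs (fun i hi => by
      have h2 : i ≠ a := fun h => ha (h ▸ hi)
      simpa [hw₂, Function.update_of_ne h2] using hsw i (mem_insert_of_mem hi))
    rw [Finset.sum_powerset_insert ha]
    have key' : f w ≤ f w₂ + f w₁ := key.trans (le_of_eq (add_comm _ _))
    refine key'.trans (add_le_add (ih2.trans (le_of_eq ?_)) (ih1.trans (le_of_eq ?_)))
    · -- w₂ sum matches the `S` terms
      apply Finset.sum_congr rfl
      intro S hS
      congr 1
      funext i
      rw [Finset.mem_powerset] at hS
      by_cases h2 : i = a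
      · subst h2
        have hiS : i ∉ S := fun h => ha (hS h)
        simp [hw₂, ha, hiS, Function.update_self]
      · by_cases h1 : i ∈ T
        · simp [h1, h2, hw₂, Function.update_of_ne h2]
        · simp [h1, h2, hw₂, Function.update_of_ne h2]
    · -- w₁ sum matches the `insert a S` terms
      apply Finset.sum_congr rfl
      intro S hS
      congr 1
      funext i
      by_cases h2 : i = a
      · subst h2; simp [hw₁, ha, Function.update_self]
      · rw [Finset.mem_powerset] at hS
        have hiS : i ∈ insert a S ↔ i ∈ S := by simp [h2]
        by_cases h1 : i ∈ T
        · simp [h1, h2, hiS, hw₁, Function.update_of_ne h2]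
        · simp [h1, h2, hw₁, Function.update_of_ne h2]

lemma fekete_split'
    (hf : ∀ (i : Fin d) (x : Fin d → ℝ) (y : ℝ), (∀ j, 0 < x j) → 0 < y →
      f (Function.update x i (x i + y)) ≤ f x + f (Function.update x i y))
    (w : Fin d → ℝ) (hw : ∀ i, 0 < w i) (s : Fin d → ℝ) (hs : ∀ i, 0 < s i)
    (hsw : ∀ i, s i < w i) :
    f w ≤ ∑ S ∈ (univ : Finset (Fin d)).powerset,
      f (fun i => if i ∈ S then s i else w i - s i) := by
  have h := fekete_split hf univ w hw s hs (fun i _ => hsw i)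
  simpa using h

/-- Measurable componentwise-subadditive functions are bounded above on boxes. -/
lemma fekete_bound
    (hf : ∀ (i : Fin d) (x : Fin d → ℝ) (y : ℝ), (∀ j, 0 < x j) → 0 < y →
      f (Function.update x i (x i + y)) ≤ f x + f (Function.update x i y))
    (hmeas : AEMeasurable f (volume.restrict {x : Fin d → ℝ | ∀ i, 0 < x i}))
    (x : Fin d → ℝ) (hx : ∀ i, 0 < x i) :
    ∃ B : ℝ, ∀ z : Fin d → ℝ, (∀ i, x i ≤ z i ∧ z i ≤ 2 * x i) → f z ≤ B := by
  by_contra hcon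
  push_neg at hcon
  set P' : Set (Fin d → ℝ) := {x : Fin d → ℝ | ∀ i, 0 < x i} with hP'def
  have hP' : MeasurableSet P' := by
    have : P' = Set.univ.pi (fun _ : Fin d => Set.Ioi (0:ℝ)) := by
      ext y; simp [hP'def, Set.mem_pi]
    rw [this]
    exact MeasurableSet.univ_pi fun i => measurableSet_Ioi
  set g := hmeas.mk f with hgdef
  have hg : Measurable g := hmeas.measurable_mk
  have hfg : f =ᵐ[volume.restrict P'] g := hmeas.ae_eq_mk
  have hN : volume ({y | f y ≠ g y} ∩ P') = 0 := by
    have := hfg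
    rw [Filter.EventuallyEq, ae_iff, Measure.restrict_apply' hP'] at this
    exact this
  set O : Set (Fin d → ℝ) := Set.univ.pi fun i => Set.Ioc 0 (2 * x i) with hOdef
  have hO : MeasurableSet O := MeasurableSet.univ_pi fun i => measurableSet_Ioc
  have hOP' : O ⊆ P' := by
    intro y hy i
    exact ((Set.mem_pi.1 hy) i (Set.mem_univ i)).1
  have hOvol : volume O ≠ ⊤ := by
    rw [hOdef, volume_pi_pi]
    simp only [Real.volume_Ioc, sub_zero]
    exact (ENNReal.prod_lt_top fun i _ => ENNReal.ofReal_lt_top).ne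
  set G : ℕ → Set (Fin d → ℝ) := fun M => O ∩ {y | (M : ℝ) < g y} with hGdef
  have hGmeas : ∀ M, MeasurableSet (G M) := fun M =>
    hO.inter (measurableSet_lt measurable_const hg)
  set c0 : ℝ≥0∞ := ∏ i, ENNReal.ofReal (x i / 2) with hc0def
  have hc0pos : 0 < c0 := by
    rw [hc0def]
    refine CanonicallyOrderedAdd.prod_pos.2 fun i _ => ?_
    exact ENNReal.ofReal_pos.2 (by linarith [hx i])
  have claim : ∀ M : ℕ, c0 ≤ 2 ^ d * volume (G M) := by
    intro M
    obtain ⟨z, hz, hfz⟩ := hcon (2 ^ d * M)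
    have hzpos : ∀ i, 0 < z i := fun i => lt_of_lt_of_le (hx i) (hz i).1
    set Q : Set (Fin d → ℝ) := Set.univ.pi fun i => Set.Ioo 0 (z i / 2) with hQdef
    set φ : Finset (Fin d) → (Fin d → ℝ) → (Fin d → ℝ) :=
      fun S s i => if i ∈ S then s i else z i - s i with hφdef
    have hφmp : ∀ S, MeasurePreserving (φ S) volume volume := by
      intro S
      have : φ S = fun (a : Fin d → ℝ) i =>
          (fun t : ℝ => if i ∈ S then t else z i - t) (a i) := by
        funext a i
        by_cases h : i ∈ S <;> simp [hφdef, h]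
      rw [this]
      refine volume_preserving_pi (f := fun (i : Fin d) (t : ℝ) => if i ∈ S then t else z i - t) fun i => ?_
      by_cases h : i ∈ S
      · simp only [h, if_true]; exact MeasurePreserving.id _
      · simp only [h, if_false]; exact Measure.measurePreserving_sub_left volume (z i)
    -- each φ S maps Q into O
    have hφO : ∀ S, ∀ s ∈ Q, φ S s ∈ O := by
      intro S s hs
      rw [hOdef, Set.mem_pi]
      intro i _
      have hsi := (Set.mem_pi.1 hs) i (Set.mem_univ i)
      simp only [Set.mem_Ioo] at hsi
      simp only [hφdef, Set.mem_Ioc]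
      by_cases h : i ∈ S
      · simp only [h, if_true]
        exact ⟨hsi.1, by linarith [(hz i).2, hzpos i]⟩
      · simp only [h, if_false]
        exact ⟨by linarith [hsi.2, hzpos i], by linarith [(hz i).2, hsi.1]⟩
    -- splitting inequality
    have hsplit : ∀ s ∈ Q, ∃ S : Finset (Fin d), (M : ℝ) < f (φ S s) := by
      intro s hs
      have hspos : ∀ i, 0 < s i := fun i => ((Set.mem_pi.1 hs) i (Set.mem_univ i)).1
      have hssmall : ∀ i, s i < z i := fun i => by
        have := ((Set.mem_pi.1 hs) i (Set.mem_univ i)).2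
        linarith [hzpos i]
      have h1 := fekete_split' hf z hzpos s hspos hssmall
      by_contra hc
      push_neg at hc
      have h2 : ∑ S ∈ (univ : Finset (Fin d)).powerset, f (φ S s) ≤
          ((univ : Finset (Fin d)).powerset.card : ℝ) * M := by
        rw [← nsmul_eq_mul]
        exact Finset.sum_le_card_nsmul _ _ _ fun S _ => hc S
      rw [Finset.card_powerset, Finset.card_univ, Fintype.card_fin] at h2
      push_cast at h2
      have h3 : f z ≤ (2:ℝ) ^ d * M := h1.trans h2
      push_cast at hfz
      linarith
    -- covering
    have hcover : Q ⊆ (⋃ S ∈ (univ : Finset (Fin d)).powerset, φ S ⁻¹' (G M)) ∪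
        (⋃ S ∈ (univ : Finset (Fin d)).powerset, φ S ⁻¹' ({y | f y ≠ g y} ∩ P')) := by
      intro s hs
      by_cases hbad : s ∈ ⋃ S ∈ (univ : Finset (Fin d)).powerset,
          φ S ⁻¹' ({y | f y ≠ g y} ∩ P')
      · exact Or.inr hbad
      · left
        obtain ⟨S, hS⟩ := hsplit s hs
        simp only [Set.mem_iUnion, not_exists] at hbad
        have hSO : φ S s ∈ O := hφO S s hs
        have hfgS : f (φ S s) = g (φ S s) := by
          by_contra hne
          exact hbad S (Finset.mem_powerset.2 (Finset.subset_univ S))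
            ⟨hne, hOP' hSO⟩
        refine Set.mem_biUnion (Finset.mem_powerset.2 (Finset.subset_univ S)) ?_
        refine ⟨hSO, ?_⟩
        show (M : ℝ) < g (φ S s)
        rw [← hfgS]
        exact hS
    -- measure computation
    have hQvol : c0 ≤ volume Q := by
      rw [hQdef, volume_pi_pi, hc0def]
      refine Finset.prod_le_prod' fun i _ => ?_
      rw [Real.volume_Ioo]
      exact ENNReal.ofReal_le_ofReal (by linarith [(hz i).1])
    have h3 : volume Q ≤ 2 ^ d * volume (G M) := by
      calc volume Q ≤ volume (⋃ S ∈ (univ : Finset (Fin d)).powerset, φ S ⁻¹' (G M)) +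
            volume (⋃ S ∈ (univ : Finset (Fin d)).powerset,
              φ S ⁻¹' ({y | f y ≠ g y} ∩ P')) :=
            le_trans (measure_mono hcover) (measure_union_le _ _)
        _ ≤ (∑ S ∈ (univ : Finset (Fin d)).powerset, volume (φ S ⁻¹' (G M))) + 0 := by
            refine add_le_add (measure_biUnion_finset_le _ _) ?_
            refine le_of_eq (measure_biUnion_null_iff ?_ |>.2 fun S _ => ?_)
            · exact (Finset.countable_toSet _)
            · exact (hφmp S).quasiMeasurePreserving.preimage_null hN
        _ = ∑ S ∈ (univ : Finset (Fin d)).powerset, volume (G M) := by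
            rw [add_zero]
            exact Finset.sum_congr rfl fun S _ =>
              (hφmp S).measure_preimage (hGmeas M).nullMeasurableSet
        _ = 2 ^ d * volume (G M) := by
            rw [Finset.sum_const, Finset.card_powerset, Finset.card_univ, Fintype.card_fin,
              nsmul_eq_mul]
            push_cast
            rfl
    exact hQvol.trans h3
  -- contradiction via continuity from above
  have hanti : Antitone G := by
    intro M M' hMM' y hy
    exact ⟨hy.1, lt_of_le_of_lt (by exact_mod_cast hMM' : (M:ℝ) ≤ M') hy.2⟩
  have hempty : ⋂ M, G M = ∅ := by
    ext y
    simp only [Set.mem_iInter, Set.mem_empty_iff_false, iff_false, not_forall]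
    refine ⟨⌈g y⌉₊, fun hy => ?_⟩
    exact absurd (show (⌈g y⌉₊ : ℝ) < g y from hy.2) (not_lt.2 (Nat.le_ceil _))
  have htend : Tendsto (fun M => volume (G M)) atTop (𝓝 0) := by
    have := tendsto_measure_iInter_atTop (fun M => (hGmeas M).nullMeasurableSet) hanti
      ⟨0, (lt_of_le_of_lt (measure_mono (Set.inter_subset_left)) (lt_top_iff_ne_top.2 hOvol)).ne⟩
    rw [hempty, measure_empty] at this
    exact this
  have htend2 : Tendsto (fun M => 2 ^ d * volume (G M)) atTop (𝓝 0) := by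
    have := ENNReal.Tendsto.const_mul htend (Or.inr (by simp : (2:ℝ≥0∞) ^ d ≠ ⊤))
    simpa using this
  exact absurd (ge_of_tendsto' htend2 claim) hc0pos.not_ge

end FeketeAux

section FeketeNum

lemma fekete_prod_one_sub {ι : Type*} [DecidableEq ι] (s : Finset ι) (δ : ι → ℝ)
    (h0 : ∀ i ∈ s, 0 ≤ δ i) (h1 : ∀ i ∈ s, δ i ≤ 1) :
    1 - ∑ i ∈ s, δ i ≤ ∏ i ∈ s, (1 - δ i) := by
  induction s using Finset.induction with
  | empty => simp
  | @insert a s ha ih =>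
    rw [Finset.sum_insert ha, Finset.prod_insert ha]
    have ih' := ih (fun i hi => h0 i (Finset.mem_insert_of_mem hi))
      (fun i hi => h1 i (Finset.mem_insert_of_mem hi))
    have hprodnn : (0:ℝ) ≤ ∏ i ∈ s, (1 - δ i) :=
      Finset.prod_nonneg fun i hi => by linarith [h1 i (Finset.mem_insert_of_mem hi)]
    have ha0 := h0 a (Finset.mem_insert_self a s)
    have ha1 := h1 a (Finset.mem_insert_self a s)
    have hs0 : (0:ℝ) ≤ ∑ i ∈ s, δ i :=
      Finset.sum_nonneg fun i hi => h0 i (Finset.mem_insert_of_mem hi)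
    nlinarith [mul_le_mul_of_nonneg_left ih' (by linarith : (0:ℝ) ≤ 1 - δ a), hs0, ha0]

lemma fekete_prodlb {d : ℕ} (m : Fin d → ℕ) (n₀ : ℕ) (hn₀ : 1 ≤ n₀)
    (hm : ∀ i, n₀ ≤ m i) (k : ℝ) (hk : 0 < k) :
    (n₀ : ℝ) * ((∏ i, ((m i : ℝ) + k)) - ∏ i, (m i : ℝ)) ≤
      (d : ℝ) * k * ∏ i, ((m i : ℝ) + k) := by
  have hn₀r : (0:ℝ) < n₀ := by exact_mod_cast hn₀
  have hmk : ∀ i : Fin d, (0:ℝ) < (m i : ℝ) + k := fun i => by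
    have : (0:ℝ) ≤ (m i : ℝ) := Nat.cast_nonneg _
    linarith
  set δ : Fin d → ℝ := fun i => k / ((m i : ℝ) + k) with hδ
  have hδ0 : ∀ i : Fin d, 0 ≤ δ i := fun i => div_nonneg hk.le (hmk i).le
  have hδ1 : ∀ i : Fin d, δ i ≤ 1 := fun i => by
    rw [hδ, div_le_one (hmk i)]
    have : (0:ℝ) ≤ (m i : ℝ) := Nat.cast_nonneg _
    linarith
  have hδn₀ : ∀ i : Fin d, δ i ≤ k / n₀ := fun i => by
    apply div_le_div_of_nonneg_left hk.le hn₀r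
    have : (n₀ : ℝ) ≤ (m i : ℝ) := by exact_mod_cast hm i
    linarith
  have hfact : ∀ i : Fin d, (1 - δ i) * ((m i : ℝ) + k) = (m i : ℝ) := fun i => by
    simp only [hδ]; rw [sub_mul, div_mul_cancel₀ _ (hmk i).ne']; ring
  have key : (1 - ∑ i, δ i) * ∏ i, ((m i : ℝ) + k) ≤ ∏ i, (m i : ℝ) := by
    calc (1 - ∑ i, δ i) * ∏ i, ((m i : ℝ) + k)
        ≤ (∏ i, (1 - δ i)) * ∏ i, ((m i : ℝ) + k) := by
          apply mul_le_mul_of_nonneg_right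
            (fekete_prod_one_sub _ _ (fun i _ => hδ0 i) (fun i _ => hδ1 i))
          exact Finset.prod_nonneg fun i _ => (hmk i).le
      _ = ∏ i, ((1 - δ i) * ((m i : ℝ) + k)) := (Finset.prod_mul_distrib).symm
      _ = ∏ i, (m i : ℝ) := Finset.prod_congr rfl fun i _ => hfact i
  have hsum : ∑ i, δ i ≤ (d : ℝ) * (k / n₀) := by
    calc ∑ i, δ i ≤ ∑ _i : Fin d, (k / n₀) := Finset.sum_le_sum fun i _ => hδn₀ i
      _ = (d : ℝ) * (k / n₀) := by simp [mul_comm]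
  have hQ0 : (0:ℝ) ≤ ∏ i, ((m i : ℝ) + k) := Finset.prod_nonneg fun i _ => (hmk i).le
  have h2 : (∏ i, ((m i : ℝ) + k)) - ∏ i, (m i : ℝ) ≤
      ((d : ℝ) * (k / n₀)) * ∏ i, ((m i : ℝ) + k) := by
    nlinarith [key, mul_le_mul_of_nonneg_right hsum hQ0]
  have := mul_le_mul_of_nonneg_left h2 hn₀r.le
  calc (n₀ : ℝ) * ((∏ i, ((m i : ℝ) + k)) - ∏ i, (m i : ℝ))
      ≤ (n₀ : ℝ) * (((d : ℝ) * (k / n₀)) * ∏ i, ((m i : ℝ) + k)) := this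
    _ = (d : ℝ) * k * ∏ i, ((m i : ℝ) + k) := by
        field_simp

end FeketeNum

section FeketeAux2

variable {d : ℕ} {f : (Fin d → ℝ) → ℝ}

set_option maxHeartbeats 1000000 in
/-- Main approximation: far enough out, `f y / ∏ y` is at most `f x / ∏ x + ε`. -/
lemma fekete_main (hd : 1 ≤ d)
    (hf : ∀ (i : Fin d) (x : Fin d → ℝ) (y : ℝ), (∀ j, 0 < x j) → 0 < y →
      f (Function.update x i (x i + y)) ≤ f x + f (Function.update x i y))
    (hmeas : AEMeasurable f (volume.restrict {x : Fin d → ℝ | ∀ i, 0 < x i}))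
    (x : Fin d → ℝ) (hx : ∀ i, 0 < x i) (ε : ℝ) (hε : 0 < ε) :
    ∃ N : ℝ, 0 < N ∧ ∀ y : Fin d → ℝ, (∀ i, N ≤ y i) →
      f y / ∏ i, y i ≤ f x / ∏ i, x i + ε := by
  obtain ⟨B, hB⟩ := fekete_bound hf hmeas x hx
  have hνne : Nonempty (Fin d) := ⟨⟨0, hd⟩⟩
  set px : ℝ := ∏ i, x i with hpxdef
  have hpx : 0 < px := Finset.prod_pos fun i _ => hx i
  set a : ℝ := f x with hadef
  set C : ℝ := |a| + |B| + 1 with hCdef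
  have hC : 0 < C := by positivity
  set n₀ : ℕ := max 1 ⌈2 * (d:ℝ) * C / (ε * px)⌉₊ with hn₀def
  have hn₀1 : 1 ≤ n₀ := le_max_left _ _
  have hn₀r : (1:ℝ) ≤ (n₀ : ℝ) := by exact_mod_cast hn₀1
  have hchoice : 2 * (d:ℝ) * C ≤ (n₀ : ℝ) * (ε * px) := by
    have h1 : 2 * (d:ℝ) * C / (ε * px) ≤ (⌈2 * (d:ℝ) * C / (ε * px)⌉₊ : ℝ) := Nat.le_ceil _
    have h2' : ⌈2 * (d:ℝ) * C / (ε * px)⌉₊ ≤ n₀ := le_max_right 1 _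
    have h2 : ((⌈2 * (d:ℝ) * C / (ε * px)⌉₊ : ℕ) : ℝ) ≤ (n₀ : ℝ) := by exact_mod_cast h2'
    have hεpx : 0 < ε * px := mul_pos hε hpx
    rw [div_le_iff₀ hεpx] at h1
    calc 2 * (d:ℝ) * C ≤ (⌈2 * (d:ℝ) * C / (ε * px)⌉₊ : ℝ) * (ε * px) := h1
      _ ≤ (n₀ : ℝ) * (ε * px) := by
          apply mul_le_mul_of_nonneg_right h2 hεpx.le
  set sx : ℝ := ∑ i, x i with hsxdef
  have hsx : 0 < sx := Finset.sum_pos (fun i _ => hx i) Finset.univ_nonempty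
  have hxle : ∀ i, x i ≤ sx := fun i =>
    Finset.single_le_sum (fun j _ => (hx j).le) (Finset.mem_univ i)
  refine ⟨((n₀ : ℝ) + 2) * sx, by positivity, ?_⟩
  intro y hy
  have hypos : ∀ i, 0 < y i := fun i =>
    lt_of_lt_of_le (by positivity) (hy i)
  -- the decomposition data
  set m : Fin d → ℕ := fun i => ⌊y i / x i⌋₊ - 1 with hmdef
  have hfloor : ∀ i, n₀ + 2 ≤ ⌊y i / x i⌋₊ := by
    intro i
    apply Nat.le_floor
    rw [le_div_iff₀ (hx i)]
    push_cast
    calc ((n₀ : ℝ) + 2) * x i ≤ ((n₀ : ℝ) + 2) * sx := by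
          apply mul_le_mul_of_nonneg_left (hxle i) (by positivity)
      _ ≤ y i := hy i
  have hm : ∀ i, n₀ + 1 ≤ m i := fun i => by
    have h := hfloor i; simp only [hmdef]; omega
  have hmcast : ∀ i, (m i : ℝ) = (⌊y i / x i⌋₊ : ℝ) - 1 := fun i => by
    have h1 : 1 ≤ ⌊y i / x i⌋₊ := le_trans (by omega) (hfloor i)
    simp only [hmdef]
    rw [Nat.cast_sub h1, Nat.cast_one]
  set r : Fin d → ℝ := fun i => y i - (m i : ℝ) * x i with hrdef
  have hfl1 : ∀ i, (⌊y i / x i⌋₊ : ℝ) * x i ≤ y i := fun i => by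
    have h1 : (⌊y i / x i⌋₊ : ℝ) ≤ y i / x i :=
      Nat.floor_le (div_nonneg (hypos i).le (hx i).le)
    calc (⌊y i / x i⌋₊ : ℝ) * x i ≤ (y i / x i) * x i :=
          mul_le_mul_of_nonneg_right h1 (hx i).le
      _ = y i := div_mul_cancel₀ _ (hx i).ne'
  have hfl2 : ∀ i, y i < ((⌊y i / x i⌋₊ : ℝ) + 1) * x i := fun i => by
    have h1 : y i / x i < (⌊y i / x i⌋₊ : ℝ) + 1 := Nat.lt_floor_add_one _
    calc y i = (y i / x i) * x i := (div_mul_cancel₀ _ (hx i).ne').symm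
      _ < ((⌊y i / x i⌋₊ : ℝ) + 1) * x i := by
          apply mul_lt_mul_of_pos_right h1 (hx i)
  have hrval : ∀ i, r i = y i - (m i : ℝ) * x i := fun i => by simp only [hrdef]
  have hr : ∀ i, x i ≤ r i ∧ r i ≤ 2 * x i := fun i => by
    rw [hrval i, hmcast i]
    constructor
    · nlinarith [hfl1 i, hx i]
    · nlinarith [hfl2 i, hx i]
  have hyeq : ∀ i, y i = (m i : ℝ) * x i + r i := fun i => by rw [hrval i]; ring
  have hyeq' : y = fun i => (m i : ℝ) * x i + r i := funext hyeq
  -- decomposition inequality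
  have hdec := fekete_dec hf x hx m r hr B hB Finset.univ x
    (fun i => ⟨le_refl _, by linarith [hx i]⟩)
  simp only [Finset.mem_univ, if_true] at hdec
  rw [← hyeq'] at hdec
  -- products
  set P : ℝ := ∏ i, (m i : ℝ) with hPdef
  set Q : ℝ := ∏ i, ((m i : ℝ) + 1) with hQdef
  set R : ℝ := ∏ i, ((m i : ℝ) + 2) with hRdef
  set Y : ℝ := ∏ i, y i with hYdef
  have hmpos : ∀ i, (0:ℝ) < (m i : ℝ) := fun i => by
    have := hm i; have : 1 ≤ m i := by omega
    exact_mod_cast Nat.pos_of_ne_zero (by omega)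
  have hP0 : 0 ≤ P := Finset.prod_nonneg fun i _ => (hmpos i).le
  have hQ0 : 0 < Q := Finset.prod_pos fun i _ => by linarith [hmpos i]
  have hR0 : 0 < R := Finset.prod_pos fun i _ => by linarith [hmpos i]
  have hPQ : P ≤ Q := Finset.prod_le_prod (fun i _ => (hmpos i).le)
    (fun i _ => by linarith)
  have hQR : Q ≤ R := Finset.prod_le_prod (fun i _ => by linarith [hmpos i])
    (fun i _ => by linarith)
  have hY : 0 < Y := Finset.prod_pos fun i _ => hypos i
  have hY1 : Q * px ≤ Y := by
    rw [hQdef, hpxdef, hYdef, ← Finset.prod_mul_distrib]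
    refine Finset.prod_le_prod (fun i _ => ?_) (fun i _ => ?_)
    · have := hmpos i; have := hx i; positivity
    · rw [hyeq i]
      nlinarith [(hr i).1]
  have hY2 : Y ≤ R * px := by
    rw [hRdef, hpxdef, hYdef, ← Finset.prod_mul_distrib]
    refine Finset.prod_le_prod (fun i _ => (hypos i).le) (fun i _ => ?_)
    rw [hyeq i]
    nlinarith [(hr i).2]
  -- product difference bounds
  have hQP := fekete_prodlb m n₀ hn₀1 (fun i => by have := hm i; omega) 1 one_pos
  have hRP := fekete_prodlb m n₀ hn₀1 (fun i => by have := hm i; omega) 2 two_pos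
  rw [← hQdef, ← hPdef] at hQP
  rw [← hRdef, ← hPdef] at hRP
  -- final computation
  rw [div_add' _ _ _ hpx.ne', div_le_div_iff₀ hY hpx]
  show f y * px ≤ (a + ε * px) * Y
  have hn₀pos : (0:ℝ) < (n₀ : ℝ) := by linarith
  have habsB : B ≤ |B| := le_abs_self B
  have habsa : -|a| ≤ a := neg_abs_le a
  have habsa' : a ≤ |a| := le_abs_self a
  rcases le_or_gt 0 (a + ε * px) with hc | hc
  · -- nonnegative case : use Y ≥ Q * px
    have hQPnn : (0:ℝ) ≤ Q - P := by linarith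
    have habs1 : B - a ≤ C := by rw [hCdef]; linarith
    have step1 : (Q - P) * (B - a) ≤ (Q - P) * C := mul_le_mul_of_nonneg_left habs1 hQPnn
    have step2 : ((n₀:ℝ) * (Q - P)) * C ≤ ((d:ℝ) * 1 * Q) * C :=
      mul_le_mul_of_nonneg_right hQP hC.le
    have step3 : (2 * (d:ℝ) * C) * Q ≤ ((n₀:ℝ) * (ε * px)) * Q :=
      mul_le_mul_of_nonneg_right hchoice hQ0.le
    have step4 : (n₀:ℝ) * ((Q - P) * (B - a)) ≤ (n₀:ℝ) * ((Q - P) * C) :=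
      mul_le_mul_of_nonneg_left step1 hn₀pos.le
    have hεpxQ : (0:ℝ) ≤ (n₀:ℝ) * (ε * px * Q) :=
      mul_nonneg hn₀pos.le (mul_nonneg (mul_nonneg hε.le hpx.le) hQ0.le)
    have h6 : (n₀:ℝ) * ((Q - P) * (B - a)) ≤ (n₀:ℝ) * (ε * px * Q) := by
      linarith [step4, step2, step3, hεpxQ]
    have h7 : (Q - P) * (B - a) ≤ ε * px * Q := le_of_mul_le_mul_left h6 hn₀pos
    have key1 : P * a + (Q - P) * B ≤ a * Q + ε * px * Q := by linarith [h7]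
    calc f y * px ≤ (P * a + (Q - P) * B) * px := mul_le_mul_of_nonneg_right hdec hpx.le
      _ ≤ (a * Q + ε * px * Q) * px := mul_le_mul_of_nonneg_right key1 hpx.le
      _ = (a + ε * px) * (Q * px) := by ring
      _ ≤ (a + ε * px) * Y := mul_le_mul_of_nonneg_left hY1 hc
  · -- negative case : use Y ≤ R * px
    have hRPnn : (0:ℝ) ≤ R - P := by linarith
    have hQPnn : (0:ℝ) ≤ Q - P := by linarith
    have step1 : (Q - P) * B ≤ (R - P) * |B| := by
      calc (Q - P) * B ≤ (Q - P) * |B| := mul_le_mul_of_nonneg_left habsB hQPnn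
        _ ≤ (R - P) * |B| := mul_le_mul_of_nonneg_right (by linarith) (abs_nonneg B)
    have step2 : a * P - a * R ≤ (R - P) * |a| := by
      have h1 : a * P - a * R = (-a) * (R - P) := by ring
      rw [h1]
      calc (-a) * (R - P) ≤ |a| * (R - P) := mul_le_mul_of_nonneg_right (by linarith) hRPnn
        _ = (R - P) * |a| := by ring
    have h8 : (R - P) * (|a| + |B|) ≤ (R - P) * C :=
      mul_le_mul_of_nonneg_left (by rw [hCdef]; linarith) hRPnn
    have step3 : ((n₀:ℝ) * (R - P)) * C ≤ ((d:ℝ) * 2 * R) * C :=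
      mul_le_mul_of_nonneg_right hRP hC.le
    have step4 : (2 * (d:ℝ) * C) * R ≤ ((n₀:ℝ) * (ε * px)) * R :=
      mul_le_mul_of_nonneg_right hchoice hR0.le
    have hεpxR : (0:ℝ) ≤ (n₀:ℝ) * (ε * px * R) :=
      mul_nonneg hn₀pos.le (mul_nonneg (mul_nonneg hε.le hpx.le) hR0.le)
    have h6 : (n₀:ℝ) * ((R - P) * C) ≤ (n₀:ℝ) * (ε * px * R) := by
      linarith [step3, step4, hεpxR]
    have h7 : (R - P) * C ≤ ε * px * R := le_of_mul_le_mul_left h6 hn₀pos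
    have key2 : P * a + (Q - P) * B ≤ a * R + ε * px * R := by
      linarith [step1, step2, h8, h7]
    calc f y * px ≤ (P * a + (Q - P) * B) * px := mul_le_mul_of_nonneg_right hdec hpx.le
      _ ≤ (a * R + ε * px * R) * px := mul_le_mul_of_nonneg_right key2 hpx.le
      _ = (a + ε * px) * (R * px) := by ring
      _ ≤ (a + ε * px) * Y := mul_le_mul_of_nonpos_left hY2 hc.le

end FeketeAux2

section FeketeCurve

variable {d : ℕ} {f : (Fin d → ℝ) → ℝ}

lemma fekete_curve {α : Type*} (hd : 1 ≤ d)
    (hf : ∀ (i : Fin d) (x : Fin d → ℝ) (y : ℝ), (∀ j, 0 < x j) → 0 < y →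
      f (Function.update x i (x i + y)) ≤ f x + f (Function.update x i y))
    (hmeas : AEMeasurable f (volume.restrict {x : Fin d → ℝ | ∀ i, 0 < x i}))
    (l : Filter α) [l.NeBot] (s : Set α) (hs : ∀ᶠ t in l, t ∈ s)
    (w : Fin d → α → ℝ) (hwpos : ∀ i, ∀ t ∈ s, 0 < w i t)
    (hw : ∀ i, Tendsto (w i) l atTop) :
    (⨅ t ∈ s, ((f (fun i => w i t) / ∏ i, w i t : ℝ) : EReal)) =
      ⨅ x ∈ {x : Fin d → ℝ | ∀ i, 0 < x i}, ((f x / ∏ i, x i : ℝ) : EReal) := by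
  apply le_antisymm
  · refine le_iInf₂ fun x hx => ?_
    by_contra h
    push_neg at h
    obtain ⟨q, hq1, hq2⟩ := EReal.exists_between_coe_real h
    have hq1' : f x / ∏ i, x i < q := EReal.coe_lt_coe_iff.1 hq1
    set ε : ℝ := q - f x / ∏ i, x i with hεdef
    have hε : 0 < ε := by rw [hεdef]; linarith
    obtain ⟨N, hN, hmain⟩ := fekete_main hd hf hmeas x hx ε hε
    have hev : ∀ᶠ t in l, (∀ i, N ≤ w i t) ∧ t ∈ s :=
      (eventually_all.2 fun i => (hw i).eventually_ge_atTop N).and hs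
    obtain ⟨t, hti, hts⟩ := hev.exists
    have hval : f (fun i => w i t) / ∏ i, w i t ≤ f x / ∏ i, x i + ε := hmain _ hti
    have hval' : f (fun i => w i t) / ∏ i, w i t ≤ q := by rw [hεdef] at hval; linarith
    have hle : (⨅ t ∈ s, ((f (fun i => w i t) / ∏ i, w i t : ℝ) : EReal)) ≤
        ((f (fun i => w i t) / ∏ i, w i t : ℝ) : EReal) := iInf₂_le t hts
    exact absurd (hle.trans (EReal.coe_le_coe_iff.2 hval')) (not_le.2 hq2)
  · refine le_iInf₂ fun t ht => ?_
    exact iInf₂_le (fun i => w i t) (fun i => hwpos i t ht)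

end FeketeCurve

/-- Let `f` be componentwise subadditive and Lebesgue measurable on the positive
orthant of `ℝ^d`, and for each coordinate `i` let `t ↦ uᵢ t` (with `t` ranging over
the positive reals) and `n ↦ vᵢ n` (with `n` ranging over the positive integers) be
positive-valued functions tending to `+∞`.  Then the infimum over the parameter of
`f(u₁(t),…,u_d(t))/(u₁(t)⋯u_d(t))` equals
`inf_{x₁,…,x_d > 0} f(x₁,…,x_d)/(x₁⋯x_d)` (in `ℝ ∪ {±∞}`), and likewise along the
positive integers. -/
theorem fekete_lemma_inf_along_curves
    (d : ℕ) (hd : 1 ≤ d) (f : (Fin d → ℝ) → ℝ)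
    (hf : ∀ (i : Fin d) (x : Fin d → ℝ) (y : ℝ), (∀ j, 0 < x j) → 0 < y →
      f (Function.update x i (x i + y)) ≤ f x + f (Function.update x i y))
    (hmeas : AEMeasurable f (volume.restrict {x : Fin d → ℝ | ∀ i, 0 < x i}))
    (u : Fin d → ℝ → ℝ) (hupos : ∀ i t, 0 < t → 0 < u i t)
    (hu : ∀ i, Tendsto (u i) atTop atTop)
    (v : Fin d → ℕ → ℝ) (hvpos : ∀ i n, 0 < n → 0 < v i n)
    (hv : ∀ i, Tendsto (v i) atTop atTop) :
    (⨅ t ∈ Set.Ioi (0 : ℝ),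
        ((f (fun i => u i t) / ∏ i, u i t : ℝ) : EReal)) =
      (⨅ x ∈ {x : Fin d → ℝ | ∀ i, 0 < x i}, ((f x / ∏ i, x i : ℝ) : EReal)) ∧
    (⨅ n ∈ {n : ℕ | 0 < n},
        ((f (fun i => v i n) / ∏ i, v i n : ℝ) : EReal)) =
      (⨅ x ∈ {x : Fin d → ℝ | ∀ i, 0 < x i}, ((f x / ∏ i, x i : ℝ) : EReal)) := by
  constructor
  · exact fekete_curve hd hf hmeas atTop (Set.Ioi 0) (eventually_gt_atTop 0) u
      (fun i t ht => hupos i t ht) hu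
  · exact fekete_curve hd hf hmeas atTop {n : ℕ | 0 < n} (eventually_gt_atTop 0) v
      (fun i n hn => hvpos i n hn) hv
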